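/- arXiv:math/0503224 — 2 statements merged into one kernel-verified Lean document; each statement's English description precedes it below -/
import Mathlib

section
/- Let M ∈ M_N(ℂ) have zero diagonal and satisfy M • M = 0, and let P ∈ M_N(ℂ) be •-invertible with •-inverse P^{•−1}. Set M' = P • M • P^{•−1}. Then for every i = 1,…,N, (M'²)_{ii} = (M²)_{ii}, where M² and M'² denote the ordinary matrix squares. That is, the diagonal of the ordinary square is invariant under •-conjugation on the Brauer loop scheme. -/
open Matrix BigOperators Finset

/-- `cyc3 i j k` : the sequence `(i,j,k)` of indices is cyclically ordered `⟨i ≤ j ≤ k⟩`,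
i.e. some cyclic rotation of it is weakly increasing, with all entries required to be
equal when the first and last entries coincide. -/
def cyc3 {N : ℕ} (i j k : Fin N) : Prop :=
  if i = k then j = i
  else (i ≤ j ∧ j ≤ k) ∨ (j ≤ k ∧ k ≤ i) ∨ (k ≤ i ∧ i ≤ j)

instance cyc3.dec {N : ℕ} (i j k : Fin N) : Decidable (cyc3 i j k) := by
  unfold cyc3; infer_instance

/-- The degenerate product `•` on `N × N` complex matrices:
`(P • Q)_{ik} = ∑_{j : ⟨i ≤ j ≤ k⟩} P_{ij} Q_{jk}`. -/
noncomputable def cprod {N : ℕ} (P Q : Matrix (Fin N) (Fin N) ℂ) :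
    Matrix (Fin N) (Fin N) ℂ :=
  Matrix.of fun i k => ∑ j ∈ Finset.univ.filter (fun j => cyc3 i j k), P i j * Q j k

noncomputable def utri {N : ℕ} (A : Matrix (Fin N) (Fin N) ℂ) : Matrix (Fin N) (Fin N) ℂ :=
  Matrix.of fun i j => if i ≤ j then A i j else 0

noncomputable def ltri {N : ℕ} (A : Matrix (Fin N) (Fin N) ℂ) : Matrix (Fin N) (Fin N) ℂ :=
  Matrix.of fun i j => if i ≤ j then 0 else A i j

lemma cyc3_self {N : ℕ} (i j : Fin N) : cyc3 i j i ↔ j = i := by simp [cyc3]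

lemma cyc3_of_lt {N : ℕ} {i k : Fin N} (h : i < k) (j : Fin N) :
    cyc3 i j k ↔ (i ≤ j ∧ j ≤ k) := by
  rw [cyc3, if_neg h.ne]
  constructor
  · rintro (h1 | ⟨_, h2⟩ | ⟨h1, _⟩)
    · exact h1
    · exact absurd h2 (not_le.2 h)
    · exact absurd h1 (not_le.2 h)
  · exact Or.inl

lemma cyc3_of_gt {N : ℕ} {i k : Fin N} (h : k < i) (j : Fin N) :
    cyc3 i j k ↔ (i ≤ j ∨ j ≤ k) := by
  rw [cyc3, if_neg h.ne']
  constructor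
  · rintro (⟨h1, h2⟩ | ⟨h1, _⟩ | ⟨_, h2⟩)
    · exact absurd (h1.trans h2) (not_le.2 h)
    · exact Or.inr h1
    · exact Or.inl h2
  · rintro (h1 | h2)
    · exact Or.inr (Or.inr ⟨h.le, h1⟩)
    · exact Or.inr (Or.inl ⟨h2, h.le⟩)

/-- The fundamental structure of the degenerate product in terms of triangular parts. -/
theorem cprod_split {N : ℕ} (A B : Matrix (Fin N) (Fin N) ℂ) :
    cprod A B = utri A * utri B + ltri (utri A * ltri B + ltri A * utri B) := by
  ext i k
  simp only [cprod, Matrix.of_apply, Matrix.add_apply, Matrix.mul_apply, utri, ltri,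
    Finset.sum_filter]
  rcases lt_trichotomy i k with h | h | h
  · rw [if_pos h.le, add_zero]
    refine Finset.sum_congr rfl fun j _ => ?_
    rw [if_congr (cyc3_of_lt h j) rfl rfl]
    by_cases hij : i ≤ j <;> by_cases hjk : j ≤ k <;> simp [hij, hjk]
  · subst h
    rw [if_pos (le_refl i), add_zero]
    refine Finset.sum_congr rfl fun j _ => ?_
    rw [if_congr (cyc3_self i j) rfl rfl]
    by_cases hij : i ≤ j <;> by_cases hji : j ≤ i <;>
      simp [hij, hji, le_antisymm_iff]
  · rw [if_neg (not_le.2 h), ← Finset.sum_add_distrib, ← Finset.sum_add_distrib]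
    refine Finset.sum_congr rfl fun j _ => ?_
    rw [if_congr (cyc3_of_gt h j) rfl rfl]
    by_cases hij : i ≤ j <;> by_cases hjk : j ≤ k <;> simp [hij, hjk]

def IsUp {N : ℕ} (A : Matrix (Fin N) (Fin N) ℂ) : Prop := ∀ i j, ¬ i ≤ j → A i j = 0
def IsLo {N : ℕ} (A : Matrix (Fin N) (Fin N) ℂ) : Prop := ∀ i j, i ≤ j → A i j = 0

section tri
variable {N : ℕ} {A B : Matrix (Fin N) (Fin N) ℂ}

lemma isUp_utri (A : Matrix (Fin N) (Fin N) ℂ) : IsUp (utri A) :=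
  fun i j h => by simp [utri, h]

lemma isLo_ltri (A : Matrix (Fin N) (Fin N) ℂ) : IsLo (ltri A) :=
  fun i j h => by simp [ltri, h]

lemma utri_add_ltri (A : Matrix (Fin N) (Fin N) ℂ) : utri A + ltri A = A := by
  ext i j; by_cases h : i ≤ j <;> simp [utri, ltri, h]

lemma isUp_one : IsUp (1 : Matrix (Fin N) (Fin N) ℂ) :=
  fun i j h => Matrix.one_apply_ne (fun e => h (e ▸ le_refl i))

lemma IsUp.mul (hA : IsUp A) (hB : IsUp B) : IsUp (A * B) := by
  intro i j h
  rw [Matrix.mul_apply]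
  refine Finset.sum_eq_zero fun k _ => ?_
  by_cases hik : i ≤ k
  · rw [hB _ _ (fun hkj => h (hik.trans hkj)), mul_zero]
  · rw [hA _ _ hik, zero_mul]

lemma IsUp.sub (hA : IsUp A) (hB : IsUp B) : IsUp (A - B) :=
  fun i j h => by rw [Matrix.sub_apply, hA _ _ h, hB _ _ h, sub_zero]

lemma utri_of_isUp (h : IsUp A) : utri A = A := by
  ext i j; by_cases hij : i ≤ j
  · simp [utri, hij]
  · simp [utri, hij, (h i j hij).symm]

lemma isUp_of_ltri_eq_zero (h : ltri A = 0) : IsUp A := by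
  intro i j hij
  have := congrFun (congrFun h i) j
  simpa [ltri, hij] using this

lemma utri_ltri (A : Matrix (Fin N) (Fin N) ℂ) : utri (ltri A) = 0 := by
  ext i j; by_cases h : i ≤ j <;> simp [utri, ltri, h]

lemma ltri_ltri (A : Matrix (Fin N) (Fin N) ℂ) : ltri (ltri A) = ltri A := by
  ext i j; by_cases h : i ≤ j <;> simp [ltri, h]

lemma utri_add (A B : Matrix (Fin N) (Fin N) ℂ) : utri (A + B) = utri A + utri B := by
  ext i j; by_cases h : i ≤ j <;> simp [utri, h]

lemma ltri_add (A B : Matrix (Fin N) (Fin N) ℂ) : ltri (A + B) = ltri A + ltri B := by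
  ext i j; by_cases h : i ≤ j <;> simp [ltri, h]

lemma utri_zero : utri (0 : Matrix (Fin N) (Fin N) ℂ) = 0 := by
  ext i j; by_cases h : i ≤ j <;> simp [utri, h]

lemma ltri_zero : ltri (0 : Matrix (Fin N) (Fin N) ℂ) = 0 := by
  ext i j; by_cases h : i ≤ j <;> simp [ltri, h]

lemma ltri_of_isUp (h : IsUp A) : ltri A = 0 := by
  ext i j; by_cases hij : i ≤ j <;> simp [ltri, hij]
  exact h i j hij

lemma utri_diag (A : Matrix (Fin N) (Fin N) ℂ) (i : Fin N) : utri A i i = A i i := by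
  simp [utri]

lemma diag_mul_upper (hA : IsUp A) (hB : IsUp B) (i : Fin N) :
    (A * B) i i = A i i * B i i := by
  rw [Matrix.mul_apply]
  refine Finset.sum_eq_single i (fun j _ hj => ?_) (fun h => absurd (Finset.mem_univ i) h)
  by_cases hij : i ≤ j
  · rw [hB _ _ (fun h => hj (le_antisymm h hij)), mul_zero]
  · rw [hA _ _ hij, zero_mul]

lemma diag_mul_lower (hA : IsLo A) (hB : IsLo B) (i : Fin N) : (A * B) i i = 0 := by
  rw [Matrix.mul_apply]
  refine Finset.sum_eq_zero fun j _ => ?_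
  rcases le_total i j with h | h
  · rw [hA _ _ h, zero_mul]
  · rw [hB _ _ h, mul_zero]

lemma pair_upper {S V : Matrix (Fin N) (Fin N) ℂ} (hS : IsUp S) (hV : IsUp V)
    (i : Fin N) (hSd : S i i = 0) : (S * V) i i + (V * S) i i = 0 := by
  rw [diag_mul_upper hS hV, diag_mul_upper hV hS, hSd]; ring

end tri

/-- On the Brauer loop scheme, the diagonal of the ordinary square is invariant under
`•`-conjugation: if `M` has zero diagonal, `M • M = 0`, and `P` is `•`-invertible with
`•`-inverse `Pinv`, then the `•`-conjugate `M' = P • M • Pinv` satisfies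
`(M'²)_{ii} = (M²)_{ii}` for every `i`, where squares are ordinary matrix squares. -/
theorem brauer_square_diag_invariant (N : ℕ) (hN : 0 < N)
    (M P Pinv : Matrix (Fin N) (Fin N) ℂ)
    (hdiag : ∀ i, M i i = 0) (hMM : cprod M M = 0)
    (hP : cprod P Pinv = 1) (hP' : cprod Pinv P = 1) :
    ∀ i : Fin N,
      (cprod (cprod P M) Pinv * cprod (cprod P M) Pinv) i i = (M * M) i i := by
  intro i
  set a := utri M with ha
  set b := ltri M with hb
  set u := utri P with hu
  set u' := utri Pinv with hu'
  set p₂ := ltri P with hp₂def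
  set q₂ := ltri Pinv with hq₂def
  have hau : IsUp a := isUp_utri M
  have huu : IsUp u := isUp_utri P
  have hu'u : IsUp u' := isUp_utri Pinv
  rw [cprod_split] at hMM
  have haa : a * a = 0 := by
    have h := congrArg utri hMM
    rwa [utri_add, utri_of_isUp (hau.mul hau), utri_ltri, add_zero, utri_zero] at h
  set G := a * b + b * a with hG
  have hGlo : ltri G = 0 := by
    have h := congrArg ltri hMM
    rwa [ltri_add, ltri_of_isUp (hau.mul hau), ltri_ltri, zero_add, ltri_zero] at h
  have hGup : IsUp G := isUp_of_ltri_eq_zero hGlo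
  -- decompose hP, hP'
  rw [cprod_split] at hP hP'
  have huu' : u * u' = 1 := by
    have h := congrArg utri hP
    rwa [utri_add, utri_of_isUp (huu.mul hu'u), utri_ltri, add_zero,
      utri_of_isUp isUp_one] at h
  have hu'u1 : u' * u = 1 := by
    have h := congrArg utri hP'
    rwa [utri_add, utri_of_isUp (hu'u.mul huu), utri_ltri, add_zero,
      utri_of_isUp isUp_one] at h
  set E₂ := u' * p₂ + q₂ * u with hE₂
  have hE₂up : IsUp E₂ := by
    apply isUp_of_ltri_eq_zero
    have h := congrArg ltri hP'
    rwa [ltri_add, ltri_of_isUp (hu'u.mul huu), ltri_ltri, zero_add,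
      ltri_of_isUp isUp_one] at h
  set F := u' * p₂ with hF
  have hpF : p₂ = u * F := by rw [hF, ← mul_assoc, huu', one_mul]
  have hq₂ : q₂ = (E₂ - F) * u' := by
    calc q₂ = q₂ * (u * u') := by rw [huu', mul_one]
      _ = (q₂ * u) * u' := by rw [mul_assoc]
      _ = (E₂ - F) * u' := by rw [hE₂, hF, add_sub_cancel_left]
  -- decompose M' = cprod (cprod P M) Pinv
  set W := u * b + p₂ * a with hW
  have hutriC : utri (cprod P M) = u * a := by
    rw [cprod_split, utri_add, utri_of_isUp (huu.mul hau), utri_ltri, add_zero]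
  have hltriC : ltri (cprod P M) = ltri W := by
    rw [cprod_split, ltri_add, ltri_of_isUp (huu.mul hau), ltri_ltri, zero_add]
  set T := u * a * q₂ + ltri W * u' with hT
  have hM' : cprod (cprod P M) Pinv = u * a * u' + ltri T := by
    rw [cprod_split (cprod P M) Pinv, hutriC, hltriC]
  set S := u * a * u' with hS
  set L := ltri T with hLdef
  have hSup : IsUp S := (huu.mul hau).mul hu'u
  have hSd : S i i = 0 := by
    rw [hS, diag_mul_upper (huu.mul hau) hu'u, diag_mul_upper huu hau, ha,
      utri_diag, hdiag i]
    ring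
  -- the conjugation identity
  have hconj : ∀ X Z : Matrix (Fin N) (Fin N) ℂ,
      (u * X * u') * (u * Z * u') = u * (X * Z) * u' := by
    intro X Z
    calc (u * X * u') * (u * Z * u') = u * X * ((u' * u) * (Z * u')) := by noncomm_ring
      _ = u * (X * Z) * u' := by rw [hu'u1, one_mul]; noncomm_ring
  set Y := b + (F * a - a * F) with hY
  set V := u * Y * u' with hV
  set E := (u * a * E₂ - utri W) * u' with hE
  have hEup : IsUp E := (((huu.mul hau).mul hE₂up).sub (isUp_utri W)).mul hu'u
  have hTVE : T = V + E := by
    rw [hT, hq₂, hV, hE]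
    have hltriW : ltri W = W - utri W := by
      rw [eq_sub_iff_add_eq, add_comm, utri_add_ltri]
    rw [hltriW, hW, hpF, hY]
    have h1 : u * a * ((E₂ - F) * u') = u * a * E₂ * u' - u * a * F * u' := by
      noncomm_ring
    rw [h1]
    noncomm_ring
  -- the key pairing computation
  have hkey : (S * L) i i + (L * S) i i = G i i := by
    have hL : L = T - utri T := by
      rw [hLdef, eq_sub_iff_add_eq, add_comm, utri_add_ltri]
    have step1 : (S * L) i i + (L * S) i i =
        ((S * T) i i + (T * S) i i) - ((S * utri T) i i + (utri T * S) i i) := by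
      rw [hL, Matrix.mul_sub, Matrix.sub_mul, Matrix.sub_apply, Matrix.sub_apply]
      ring
    rw [step1, pair_upper hSup (isUp_utri T) i hSd, sub_zero, hTVE]
    have step2 : (S * (V + E)) i i + ((V + E) * S) i i =
        ((S * V) i i + (V * S) i i) + ((S * E) i i + (E * S) i i) := by
      rw [Matrix.mul_add, Matrix.add_mul, Matrix.add_apply, Matrix.add_apply]
      ring
    rw [step2, pair_upper hSup hEup i hSd, add_zero]
    have hayG : a * Y + Y * a = G := by
      have expand : a * Y + Y * a = (a * b + b * a) + (F * (a * a) - (a * a) * F) := by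
        rw [hY]; noncomm_ring
      rw [expand, haa, hG]
      simp
    have hSV : S * V + V * S = u * G * u' := by
      rw [hS, hV, hconj, hconj, ← Matrix.add_mul, ← Matrix.mul_add, hayG]
    rw [← Matrix.add_apply, hSV]
    rw [diag_mul_upper (huu.mul hGup) hu'u, diag_mul_upper huu hGup]
    have h1 : u i i * u' i i = 1 := by
      have h2 := diag_mul_upper huu hu'u i
      rw [huu'] at h2
      simpa [Matrix.one_apply_eq] using h2.symm
    calc u i i * G i i * u' i i = (u i i * u' i i) * G i i := by ring
      _ = G i i := by rw [h1, one_mul]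
  -- assemble everything
  have hMsq : (M * M) i i = G i i := by
    have hMab : M = a + b := (utri_add_ltri M).symm
    have e : M * M = a * a + G + b * b := by
      rw [hG, hMab]; noncomm_ring
    rw [e, Matrix.add_apply, Matrix.add_apply, haa, Matrix.zero_apply,
      diag_mul_lower (hb ▸ isLo_ltri M) (hb ▸ isLo_ltri M) i]
    ring
  have hLlo : IsLo L := by rw [hLdef]; exact isLo_ltri T
  have expand2 : (S + L) * (S + L) = S * S + (S * L + L * S) + L * L := by
    noncomm_ring
  rw [hM', hMsq, expand2]
  simp only [Matrix.add_apply]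
  rw [diag_mul_upper hSup hSup i, hSd, diag_mul_lower hLlo hLlo i, hkey]
  ring
end

section
/- Let N ≥ 2, let i ∈ {1,…,N} (indices mod N), let λ ∈ ℂ, and let M ∈ M_N(ℂ) satisfy: M has zero diagonal, M • M = 0, and M_{i,i+1} = 0. Set N' = M + λ(e^{i+1,i} M − M e^{i+1,i}) (ordinary products). Then for all j, m ∈ {1,…,N}: (N' • N')_{jm} = λ δ_{j,i+1} δ_{m,i} ((M²)_{ii} − (M²)_{i+1,i+1} − λ (M²)_{i,i+1}), where M² is the ordinary square and δ the Kronecker delta. In particular N' • N' vanishes away from the (i+1,i) entry, and N' • N' = 0 if and only if λ = 0 or λ (M²)_{i,i+1} = (M²)_{ii} − (M²)_{i+1,i+1}. -/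
open Matrix BigOperators Finset

/- ## Auxiliary lemmas -/

lemma cyc3_val {N : ℕ} (a b c : Fin N) : cyc3 a b c ↔
    (if (a:ℕ) = c then (b:ℕ) = a else
      ((a:ℕ) ≤ b ∧ (b:ℕ) ≤ c) ∨ ((b:ℕ) ≤ c ∧ (c:ℕ) ≤ a) ∨ ((c:ℕ) ≤ a ∧ (a:ℕ) ≤ b)) := by
  unfold cyc3
  by_cases h : a = c
  · subst h; rw [if_pos rfl, if_pos rfl]; exact Fin.ext_iff
  · rw [if_neg h, if_neg (by simpa [Fin.ext_iff] using h)]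
    simp only [Fin.le_def]

lemma succ_val {N : ℕ} [NeZero N] (hN : 2 ≤ N) (i : Fin N) :
    (((i+1 : Fin N):ℕ) = (i:ℕ)+1 ∧ (i:ℕ)+1 < N) ∨ (((i+1 : Fin N):ℕ) = 0 ∧ (i:ℕ)+1 = N) := by
  have h1 : ((1 : Fin N) : ℕ) = 1 := by
    rw [Fin.val_one']
    exact Nat.mod_eq_of_lt (by omega)
  have hi := i.isLt
  rcases Nat.lt_or_ge ((i:ℕ)+1) N with h | h
  · left; exact ⟨by rw [Fin.add_def, h1]; exact Nat.mod_eq_of_lt h, h⟩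
  · right
    have : (i:ℕ)+1 = N := by omega
    exact ⟨by simp [Fin.add_def, h1, this], this⟩

section
set_option linter.unnecessarySeqFocus false
variable {N : ℕ} [NeZero N] {i : Fin N}

lemma cyc_all (hN : 2 ≤ N) (k : Fin N) : cyc3 (i+1) k i := by
  have hs := succ_val hN i
  have := i.isLt; have := k.isLt
  rw [cyc3_val]
  split_ifs with h <;> omega

lemma cyc_ne (hN : 2 ≤ N) : i ≠ i + 1 := by
  have hs := succ_val hN i
  have := i.isLt
  rw [Ne, Fin.ext_iff]
  omega

lemma cyc_self {N : ℕ} (a k : Fin N) : cyc3 a k a ↔ k = a := by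
  unfold cyc3; rw [if_pos rfl]

lemma cyc_C2 (hN : 2 ≤ N) (j k : Fin N) (h1 : j ≠ i) (h2 : j ≠ i+1) :
    cyc3 j k (i+1) ↔ (cyc3 j k i ∨ k = i+1) := by
  have hs := succ_val hN i
  have := i.isLt; have := k.isLt; have := j.isLt
  rw [Ne, Fin.ext_iff] at h1 h2
  rw [cyc3_val, cyc3_val, Fin.ext_iff]
  split_ifs <;> omega

lemma cyc_C2' (hN : 2 ≤ N) (j : Fin N) (h1 : j ≠ i) (h2 : j ≠ i+1) : ¬ cyc3 j (i+1) i := by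
  have hs := succ_val hN i
  have := i.isLt; have := j.isLt
  rw [Ne, Fin.ext_iff] at h1 h2
  rw [cyc3_val]
  split_ifs <;> omega

lemma cyc_C3 (hN : 2 ≤ N) (m k : Fin N) (h1 : m ≠ i) (h2 : m ≠ i+1) :
    cyc3 i k m ↔ (cyc3 (i+1) k m ∨ k = i) := by
  have hs := succ_val hN i
  have := i.isLt; have := k.isLt; have := m.isLt
  rw [Ne, Fin.ext_iff] at h1 h2
  rw [cyc3_val, cyc3_val, Fin.ext_iff]
  split_ifs <;> omega

lemma cyc_C3' (hN : 2 ≤ N) (m : Fin N) (h1 : m ≠ i) (h2 : m ≠ i+1) : ¬ cyc3 (i+1) i m := by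
  have hs := succ_val hN i
  have := i.isLt; have := m.isLt
  rw [Ne, Fin.ext_iff] at h1 h2
  rw [cyc3_val]
  split_ifs <;> omega

lemma cyc_C4 (hN : 2 ≤ N) (j m : Fin N) (h1 : j ≠ i+1) (h2 : m ≠ i) :
    cyc3 j (i+1) m ↔ cyc3 j i m := by
  have hs := succ_val hN i
  have := i.isLt; have := j.isLt; have := m.isLt
  rw [Ne, Fin.ext_iff] at h1 h2
  rw [cyc3_val, cyc3_val]
  split_ifs <;> omega

end

lemma Np_apply {N : ℕ} [NeZero N] (i : Fin N) (M : Matrix (Fin N) (Fin N) ℂ) (lam : ℂ)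
    (a b : Fin N) :
    (M + lam • (Matrix.single (i + 1) i (1 : ℂ) * M -
                M * Matrix.single (i + 1) i (1 : ℂ))) a b
    = M a b + (if a = i+1 then lam * M i b else 0) - (if b = i then lam * M a (i+1) else 0) := by
  have h1 : (Matrix.single (i + 1) i (1 : ℂ) * M) a b
      = if a = i+1 then M i b else 0 := by
    simp [Matrix.mul_apply, Matrix.single, ite_and, eq_comm]
  have h2 : (M * Matrix.single (i + 1) i (1 : ℂ)) a b
      = if b = i then M a (i+1) else 0 := by
    simp [Matrix.mul_apply, Matrix.single, ite_and, eq_comm]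
  simp [Matrix.add_apply, Matrix.sub_apply, Matrix.smul_apply, h1, h2, mul_sub, smul_eq_mul]
  split_ifs <;> ring

lemma sum_filter_split {N : ℕ} (p q : Fin N → Prop) [DecidablePred p] [DecidablePred q]
    (a : Fin N) (f : Fin N → ℂ) (h : ∀ k, q k ↔ p k ∨ k = a) (ha : ¬ p a) :
    ∑ k ∈ univ.filter q, f k = (∑ k ∈ univ.filter p, f k) + f a := by
  have hq : univ.filter q = insert a (univ.filter p) := by
    ext k; simp [h k, or_comm]
  rw [hq, Finset.sum_insert (by simp [ha]), add_comm]

/-- The heart of the Bott–Samelson sweep: let `M` have zero diagonal, `M • M = 0` and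
`M_{i,i+1} = 0` (indices mod `N`), and set `N' = M + λ [e^{i+1,i}, M]` (ordinary
commutator).  Then `(N' • N')_{jm} = λ δ_{j,i+1} δ_{m,i} ((M²)_{ii} − (M²)_{i+1,i+1} −
λ (M²)_{i,i+1})`; in particular `N' • N'` vanishes away from the `(i+1,i)` entry, and
`N' • N' = 0` iff `λ = 0` or `λ (M²)_{i,i+1} = (M²)_{ii} − (M²)_{i+1,i+1}`. -/
theorem brauer_sweep_square (N : ℕ) [NeZero N] (hN : 2 ≤ N) (i : Fin N) (lam : ℂ)
    (M : Matrix (Fin N) (Fin N) ℂ)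
    (hdiag : ∀ j, M j j = 0) (hMM : cprod M M = 0) (h0 : M i (i + 1) = 0) :
    (∀ j m : Fin N,
      cprod (M + lam • (Matrix.single (i + 1) i (1 : ℂ) * M -
                        M * Matrix.single (i + 1) i (1 : ℂ)))
            (M + lam • (Matrix.single (i + 1) i (1 : ℂ) * M -
                        M * Matrix.single (i + 1) i (1 : ℂ))) j m =
        if j = i + 1 ∧ m = i then
          lam * ((M * M) i i - (M * M) (i + 1) (i + 1) - lam * (M * M) i (i + 1))
        else 0) ∧
    (cprod (M + lam • (Matrix.single (i + 1) i (1 : ℂ) * M -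
                       M * Matrix.single (i + 1) i (1 : ℂ)))
           (M + lam • (Matrix.single (i + 1) i (1 : ℂ) * M -
                       M * Matrix.single (i + 1) i (1 : ℂ))) = 0 ↔
      (lam = 0 ∨
        lam * (M * M) i (i + 1) = (M * M) i i - (M * M) (i + 1) (i + 1))) := by
  set Np := M + lam • (Matrix.single (i + 1) i (1 : ℂ) * M -
                       M * Matrix.single (i + 1) i (1 : ℂ)) with hNpdef
  have hne : i ≠ i + 1 := cyc_ne hN
  have hne' : (i + 1 : Fin N) ≠ i := Ne.symm hne
  have hNp : ∀ a b, Np a b = M a b + (if a = i+1 then lam * M i b else 0)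
      - (if b = i then lam * M a (i+1) else 0) := by
    intro a b; rw [hNpdef]; exact Np_apply i M lam a b
  have hMM' : ∀ a b : Fin N,
      ∑ k ∈ univ.filter (fun k => cyc3 a k b), M a k * M k b = 0 := by
    intro a b
    have h := congrFun (congrFun hMM a) b
    simpa [cprod] using h
  have key : ∀ j m : Fin N, cprod Np Np j m =
      if j = i + 1 ∧ m = i then
        lam * ((M * M) i i - (M * M) (i + 1) (i + 1) - lam * (M * M) i (i + 1))
      else 0 := by
    intro j m
    simp only [cprod, Matrix.of_apply]
    by_cases hj : j = i + 1
    · rw [hj]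
      by_cases hm : m = i
      · rw [hm]
        rw [if_pos ⟨rfl, rfl⟩]
        rw [Finset.filter_true_of_mem (fun k _ => cyc_all hN k)]
        have expand : ∀ k : Fin N, Np (i+1) k * Np k i =
            M (i+1) k * M k i + lam * (M i k * M k i)
              - lam * (M (i+1) k * M k (i+1)) - lam * (lam * (M i k * M k (i+1))) := by
          intro k
          by_cases h1 : k = i
          · simp [hNp, h1, hdiag, h0, hne, hne']
            try ring
          · by_cases h2 : k = i+1
            · simp [hNp, h1, h2, hdiag, h0, hne, hne']
              try ring
            · simp [hNp, h1, h2, hdiag, h0, hne, hne']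
              try ring
        have s1 : ∑ k ∈ univ, M (i+1) k * M k i = 0 := by
          have h := hMM' (i+1) i
          rwa [Finset.filter_true_of_mem (fun k _ => cyc_all hN k)] at h
        calc ∑ k ∈ univ, Np (i+1) k * Np k i
            = (∑ k ∈ univ, M (i+1) k * M k i) + lam * (∑ k ∈ univ, M i k * M k i)
              - lam * (∑ k ∈ univ, M (i+1) k * M k (i+1))
              - lam * (lam * (∑ k ∈ univ, M i k * M k (i+1))) := by
              simp only [Finset.mul_sum, ← Finset.sum_add_distrib, ← Finset.sum_sub_distrib]
              exact Finset.sum_congr rfl fun k _ => expand k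
          _ = lam * ((M * M) i i - (M * M) (i + 1) (i + 1) - lam * (M * M) i (i + 1)) := by
              rw [s1, Matrix.mul_apply, Matrix.mul_apply, Matrix.mul_apply]; ring
      · by_cases hm2 : m = i + 1
        · rw [hm2]
          rw [if_neg (fun h => hne' h.2)]
          have hfil : univ.filter (fun k => cyc3 (i+1) k (i+1)) = {i+1} := by
            ext k; simp [cyc_self]
          rw [hfil, Finset.sum_singleton, hNp, if_pos rfl, if_neg hne']
          simp [hdiag, h0]
        · rw [if_neg (fun h => hm h.2)]
          have expand : ∀ k : Fin N, Np (i+1) k * Np k m =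
              M (i+1) k * M k m + lam * (M i k * M k m) := by
            intro k
            by_cases h1 : k = i
            · simp [hNp, h1, hdiag, h0, hne, hne', hm, hm2]
              try ring
            · by_cases h2 : k = i+1
              · simp [hNp, h1, h2, hdiag, h0, hne, hne', hm, hm2]
                try ring
              · simp [hNp, h1, h2, hdiag, h0, hne, hne', hm, hm2]
                try ring
          have s1 := hMM' (i+1) m
          have s2 : ∑ k ∈ univ.filter (fun k => cyc3 (i+1) k m), M i k * M k m = 0 := by
            have h := sum_filter_split (fun k => cyc3 (i+1) k m) (fun k => cyc3 i k m)
              i (fun k => M i k * M k m) (fun k => cyc_C3 hN m k hm hm2)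
              (cyc_C3' hN m hm hm2)
            rw [hMM' i m] at h
            simp only [hdiag, zero_mul, add_zero] at h
            exact h.symm
          calc ∑ k ∈ univ.filter (fun k => cyc3 (i+1) k m), Np (i+1) k * Np k m
              = ∑ k ∈ univ.filter (fun k => cyc3 (i+1) k m),
                  (M (i+1) k * M k m + lam * (M i k * M k m)) :=
                Finset.sum_congr rfl fun k _ => expand k
            _ = 0 := by
                rw [Finset.sum_add_distrib, ← Finset.mul_sum, s1, s2, mul_zero, add_zero]
    · by_cases hm : m = i
      · rw [hm]
        rw [if_neg (fun h => hj h.1)]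
        by_cases hj2 : j = i
        · rw [hj2]
          have hfil : univ.filter (fun k => cyc3 i k i) = {i} := by
            ext k; simp [cyc_self]
          rw [hfil, Finset.sum_singleton, hNp, if_neg hne, if_pos rfl]
          simp [hdiag, h0]
        · have expand : ∀ k : Fin N, Np j k * Np k i =
              M j k * M k i - lam * (M j k * M k (i+1)) := by
            intro k
            by_cases h1 : k = i
            · simp [hNp, h1, hdiag, h0, hne, hne', hj, hj2]
              try ring
            · by_cases h2 : k = i+1
              · simp [hNp, h1, h2, hdiag, h0, hne, hne', hj, hj2]
                try ring
              · simp [hNp, h1, h2, hdiag, h0, hne, hne', hj, hj2]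
                try ring
          have s1 := hMM' j i
          have s2 : ∑ k ∈ univ.filter (fun k => cyc3 j k i), M j k * M k (i+1) = 0 := by
            have h := sum_filter_split (fun k => cyc3 j k i) (fun k => cyc3 j k (i+1))
              (i+1) (fun k => M j k * M k (i+1)) (fun k => cyc_C2 hN j k hj2 hj)
              (cyc_C2' hN j hj2 hj)
            rw [hMM' j (i+1)] at h
            simp only [hdiag, mul_zero, add_zero] at h
            exact h.symm
          calc ∑ k ∈ univ.filter (fun k => cyc3 j k i), Np j k * Np k i
              = ∑ k ∈ univ.filter (fun k => cyc3 j k i),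
                  (M j k * M k i - lam * (M j k * M k (i+1))) :=
                Finset.sum_congr rfl fun k _ => expand k
            _ = 0 := by
                rw [Finset.sum_sub_distrib, ← Finset.mul_sum, s1, s2, mul_zero, sub_zero]
      · rw [if_neg (fun h => hj h.1)]
        have expand : ∀ k : Fin N, Np j k * Np k m =
            M j k * M k m + ((if k = i+1 then lam * (M j (i+1) * M i m) else 0)
              - (if k = i then lam * (M j (i+1) * M i m) else 0)) := by
          intro k
          by_cases h1 : k = i
          · simp [hNp, h1, hdiag, h0, hne, hne', hj, hm]
            try ring
          · by_cases h2 : k = i+1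
            · simp [hNp, h1, h2, hdiag, h0, hne, hne', hj, hm]
              try ring
            · simp [hNp, h1, h2, hdiag, h0, hne, hne', hj, hm]
              try ring
        have s1 := hMM' j m
        have hmem : ((i+1 : Fin N) ∈ univ.filter (fun k => cyc3 j k m))
            ↔ (i ∈ univ.filter (fun k => cyc3 j k m)) := by
          simp only [Finset.mem_filter, Finset.mem_univ, true_and]
          exact cyc_C4 hN j m hj hm
        calc ∑ k ∈ univ.filter (fun k => cyc3 j k m), Np j k * Np k m
            = ∑ k ∈ univ.filter (fun k => cyc3 j k m),
                (M j k * M k m + ((if k = i+1 then lam * (M j (i+1) * M i m) else 0)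
                  - (if k = i then lam * (M j (i+1) * M i m) else 0))) :=
              Finset.sum_congr rfl fun k _ => expand k
          _ = 0 := by
              rw [Finset.sum_add_distrib, Finset.sum_sub_distrib, s1,
                Finset.sum_ite_eq' _ (i+1) (fun _ => lam * (M j (i+1) * M i m)),
                Finset.sum_ite_eq' _ i (fun _ => lam * (M j (i+1) * M i m))]
              by_cases hA : (i+1 : Fin N) ∈ univ.filter (fun k => cyc3 j k m)
              · rw [if_pos hA, if_pos (hmem.mp hA), sub_self, add_zero]
              · rw [if_neg hA, if_neg (fun h => hA (hmem.mpr h)), sub_self, add_zero]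
  refine ⟨key, ?_⟩
  constructor
  · intro h
    have h1 := key (i+1) i
    rw [h, Matrix.zero_apply, if_pos ⟨rfl, rfl⟩] at h1
    rcases mul_eq_zero.mp h1.symm with h2 | h2
    · exact Or.inl h2
    · right
      linear_combination -h2
  · intro h
    ext j m
    rw [key j m, Matrix.zero_apply]
    split_ifs with hc
    · rcases h with h | h
      · rw [h, zero_mul]
      · linear_combination (-lam) * h
    · rfl
end
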